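/- Let Φ be a root system on 𝔱 and σ a linear isometry of finite order of 𝔱 preserving Φ and a set of simple roots Δ (hence permuting Δ). For a ∈ Φ, let ā = a|𝔱^σ. Then for every a ∈ Φ, ā ≠ 0; moreover, two roots a, a′ ∈ Φ satisfy a|𝔱^σ = a′|𝔱^σ if and only if a and a′ lie in the same ⟨σ⟩-orbit. -/

import Mathlib

open scoped RealInnerProductSpace

variable {V : Type*}

/-- The coroot `a^∨ = 2a/⟪a,a⟫` of a vector `a`, with respect to the inner product. -/
noncomputable def coroot [NormedAddCommGroup V] [InnerProductSpace ℝ V] (a : V) : V :=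
  (2 / ⟪a, a⟫) • a

/-- A (possibly non-reduced) root system on an inner product space: a finite spanning
set of nonzero vectors, integrality of the Cartan numbers `⟪b, a^∨⟫`, and closure
under the reflections `b ↦ b − ⟪b, a^∨⟫ a`. -/
def IsRootSystem [NormedAddCommGroup V] [InnerProductSpace ℝ V] (Φ : Set V) : Prop :=
  Φ.Finite ∧ (0 : V) ∉ Φ ∧ Submodule.span ℝ Φ = ⊤ ∧
    (∀ a ∈ Φ, ∀ b ∈ Φ, ∃ n : ℤ, ⟪b, coroot a⟫ = (n : ℝ)) ∧
    (∀ a ∈ Φ, ∀ b ∈ Φ, b - ⟪b, coroot a⟫ • a ∈ Φ)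

/-- A root system is reduced if the only multiples of a root `a` in it are `±a`. -/
def IsReducedRS [NormedAddCommGroup V] [InnerProductSpace ℝ V] (Φ : Set V) : Prop :=
  ∀ a ∈ Φ, ∀ t : ℝ, t • a ∈ Φ → t = 1 ∨ t = -1

/-- A root system is irreducible if it is nonempty and cannot be partitioned into two
nonempty mutually orthogonal subsets. -/
def IsIrreducibleRS [NormedAddCommGroup V] [InnerProductSpace ℝ V] (Φ : Set V) : Prop :=
  Φ.Nonempty ∧ ∀ Φ₁ Φ₂ : Set V, Φ = Φ₁ ∪ Φ₂ →
    (∀ a ∈ Φ₁, ∀ b ∈ Φ₂, ⟪a, b⟫ = 0) → Φ₁ = ∅ ∨ Φ₂ = ∅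

section Aux
variable [NormedAddCommGroup V] [InnerProductSpace ℝ V]

lemma RS.inner_self_pos {c : V} (hc : c ≠ 0) : (0:ℝ) < ⟪c, c⟫ :=
  lt_of_le_of_ne real_inner_self_nonneg (Ne.symm (fun h => hc (inner_self_eq_zero.1 h)))

lemma inner_coroot_self {c : V} (hc : c ≠ 0) : ⟪c, coroot c⟫ = 2 := by
  have h : ⟪c, c⟫ ≠ 0 := ne_of_gt (RS.inner_self_pos hc)
  simp [coroot, real_inner_smul_right]
  field_simp

lemma RS.neg_mem {Φ : Set V} (hΦ : IsRootSystem Φ) {c : V} (hc : c ∈ Φ) : -c ∈ Φ := by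
  have hc0 : c ≠ 0 := fun h => hΦ.2.1 (h ▸ hc)
  have := hΦ.2.2.2.2 c hc c hc
  rw [inner_coroot_self hc0] at this
  simpa [two_smul, sub_add_eq_sub_sub] using this

lemma inner_coroot_pos_int {Φ : Set V} (hΦ : IsRootSystem Φ) {x y : V}
    (hx : x ∈ Φ) (hy : y ∈ Φ) (hpos : 0 < ⟪x, y⟫) :
    ∃ n : ℤ, 1 ≤ n ∧ ⟪x, coroot y⟫ = (n : ℝ) := by
  obtain ⟨n, hn⟩ := hΦ.2.2.2.1 y hy x hx
  refine ⟨n, ?_, hn⟩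
  have hy0 : y ≠ 0 := fun h => hΦ.2.1 (h ▸ hy)
  have hyy : (0:ℝ) < ⟪y, y⟫ := RS.inner_self_pos hy0
  have h2 : (0:ℝ) < ⟪x, coroot y⟫ := by
    rw [coroot, real_inner_smul_right]
    positivity
  rw [hn] at h2
  exact_mod_cast h2

end Aux
section Aux2
variable [NormedAddCommGroup V] [InnerProductSpace ℝ V]

lemma RS.sub_mem {Φ : Set V} (hΦ : IsRootSystem Φ) {a b : V}
    (ha : a ∈ Φ) (hb : b ∈ Φ) (hne : a ≠ b) (hpos : 0 < ⟪a, b⟫) : a - b ∈ Φ := by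
  have ha0 : a ≠ 0 := fun h => hΦ.2.1 (h ▸ ha)
  have hb0 : b ≠ 0 := fun h => hΦ.2.1 (h ▸ hb)
  have hSa : (0:ℝ) < ⟪a, a⟫ := RS.inner_self_pos ha0
  have hSb : (0:ℝ) < ⟪b, b⟫ := RS.inner_self_pos hb0
  obtain ⟨n, hn1, hn⟩ := inner_coroot_pos_int hΦ ha hb hpos
  obtain ⟨n', hn'1, hn'⟩ := inner_coroot_pos_int hΦ hb ha (by rwa [real_inner_comm])
  by_cases hdep : ‖b‖ • a = ‖a‖ • b
  · -- dependent case : b = t • a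
    have hna : ‖a‖ ≠ 0 := norm_ne_zero_iff.2 ha0
    set t : ℝ := ‖b‖ / ‖a‖ with ht
    have htb : b = t • a := by
      have h2 : (‖a‖)⁻¹ • (‖b‖ • a) = (‖a‖)⁻¹ • (‖a‖ • b) := by rw [hdep]
      rw [smul_smul, smul_smul, inv_mul_cancel₀ hna, one_smul] at h2
      rw [ht, div_eq_inv_mul]
      exact h2.symm
    have ht0 : 0 < t := div_pos (norm_pos_iff.2 hb0) (norm_pos_iff.2 ha0)
    have ht0' : t ≠ 0 := ne_of_gt ht0
    have hS : ⟪a, a⟫ ≠ 0 := ne_of_gt hSa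
    have ht1 : t ≠ 1 := by
      intro h; apply hne; rw [htb, h, one_smul]
    have hcompute : ⟪a, coroot b⟫ = 2 / t := by
      rw [htb, coroot]
      simp only [real_inner_smul_left, real_inner_smul_right]
      field_simp
    have htn : t = 2 / (n : ℝ) := by
      have hnR : (0:ℝ) < n := by exact_mod_cast hn1
      rw [hn] at hcompute
      field_simp at hcompute ⊢
      linarith [hcompute]
    have hcompute' : ⟪b, coroot a⟫ = 2 * t := by
      rw [htb, coroot]
      simp only [real_inner_smul_left, real_inner_smul_right]
      field_simp
    have hprod : n * n' = 4 := by
      have : ((n * n' : ℤ) : ℝ) = 4 := by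
        push_cast
        rw [← hn, ← hn', hcompute, hcompute']
        field_simp
        ring
      exact_mod_cast this
    have hn2 : n ≠ 2 := by
      intro h
      apply ht1
      rw [htn, h]; norm_num
    have hn4 : n ≤ 4 := by nlinarith
    interval_cases n
    · -- n = 1, t = 2
      have ht2 : t = 2 := by rw [htn]; norm_num
      have he : a - b = -a := by rw [htb, ht2]; module
      rw [he]; exact RS.neg_mem hΦ ha
    · exact absurd rfl hn2
    · omega
    · -- n = 4, t = 1/2
      have ht2 : t = 1/2 := by rw [htn]; norm_num
      have he : a - b = b := by rw [htb, ht2]; module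
      rw [he]; exact hb
  · -- independent case
    have hlt : ⟪a, b⟫ < ‖a‖ * ‖b‖ := inner_lt_norm_mul_iff_real.2 hdep
    have hsq : ⟪a, b⟫ * ⟪a, b⟫ < ⟪a, a⟫ * ⟪b, b⟫ := by
      rw [real_inner_self_eq_norm_mul_norm, real_inner_self_eq_norm_mul_norm]
      calc ⟪a, b⟫ * ⟪a, b⟫ < (‖a‖ * ‖b‖) * (‖a‖ * ‖b‖) :=
            mul_lt_mul' (le_of_lt hlt) hlt (le_of_lt hpos)
              (mul_pos (norm_pos_iff.2 ha0) (norm_pos_iff.2 hb0))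
        _ = ‖a‖ * ‖a‖ * (‖b‖ * ‖b‖) := by ring
    have hprodR : ((n : ℝ)) * ((n' : ℝ)) < 4 := by
      have e1 : (n : ℝ) = 2 * ⟪a, b⟫ / ⟪b, b⟫ := by
        rw [← hn, coroot, real_inner_smul_right]; ring
      have e2 : (n' : ℝ) = 2 * ⟪a, b⟫ / ⟪a, a⟫ := by
        rw [← hn', coroot, real_inner_smul_right, real_inner_comm b a]; ring
      rw [e1, e2]
      rw [div_mul_div_comm, div_lt_iff₀ (by positivity)]
      nlinarith [hsq]
    have hprodZ : n * n' < 4 := by exact_mod_cast hprodR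
    have hor : n = 1 ∨ n' = 1 := by
      by_contra hc
      push_neg at hc
      have h1 : 2 ≤ n := by omega
      have h2 : 2 ≤ n' := by omega
      nlinarith
    rcases hor with h1 | h1
    · have := hΦ.2.2.2.2 b hb a ha
      rw [hn, h1] at this
      simpa using this
    · have := hΦ.2.2.2.2 a ha b hb
      rw [hn', h1] at this
      simp only [Int.cast_one, one_smul] at this
      have := RS.neg_mem hΦ this
      simpa using this

end Aux2

/-- Let `Φ` be a root system on `𝔱` with simple roots `a i`, and `σ` a linear isometry
of finite order preserving `Φ` and the set of simple roots. Then the restriction of any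
root to the fixed subspace `𝔱^σ` is nonzero, and two roots have the same restriction
to `𝔱^σ` iff they lie in the same `⟨σ⟩`-orbit. -/
theorem restriction_fixed_subspace {ι : Type*} [Fintype ι]
    [NormedAddCommGroup V] [InnerProductSpace ℝ V]
    (Φ : Set V) (hΦ : IsRootSystem Φ)
    (a : ι → V) (haΦ : ∀ i, a i ∈ Φ) (hinj : Function.Injective a)
    (hind : LinearIndependent ℝ a)
    (hbase : ∀ b ∈ Φ, (∃ c : ι → ℕ, b = ∑ i, (c i : ℝ) • a i) ∨
      (∃ c : ι → ℕ, b = -∑ i, (c i : ℝ) • a i))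
    (σ : V ≃ₗ[ℝ] V) (hiso : ∀ x y : V, ⟪σ x, σ y⟫ = ⟪x, y⟫)
    (hord : ∃ m : ℕ, 0 < m ∧ σ ^ m = 1)
    (hΦσ : σ '' Φ = Φ) (hΔσ : σ '' Set.range a = Set.range a) :
    (∀ b ∈ Φ, ∃ x : V, σ x = x ∧ ⟪b, x⟫ ≠ 0) ∧
      ∀ b ∈ Φ, ∀ b' ∈ Φ,
        ((∀ x : V, σ x = x → ⟪b, x⟫ = ⟪b', x⟫) ↔ ∃ m : ℕ, (σ ^ m) b = b') := by
  classical
  obtain ⟨m, hm0, hσm⟩ := hord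
  have hmR : (0:ℝ) < (m:ℝ) := by exact_mod_cast hm0
  -- basic facts about powers of σ
  have hmem : ∀ b ∈ Φ, σ b ∈ Φ := by
    intro b hb; rw [← hΦσ]; exact ⟨b, hb, rfl⟩
  have hpow_apply : ∀ (k : ℕ) (x : V), (σ ^ (k+1)) x = σ ((σ ^ k) x) := by
    intro k x; rw [pow_succ']; rfl
  have hpow_apply' : ∀ (k : ℕ) (x : V), (σ ^ (k+1)) x = (σ ^ k) (σ x) := by
    intro k x; rw [pow_succ]; rfl
  have hpow_mem : ∀ (k : ℕ), ∀ b ∈ Φ, (σ ^ k) b ∈ Φ := by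
    intro k
    induction k with
    | zero => intro b hb; simpa using hb
    | succ k ih => intro b hb; rw [hpow_apply]; exact hmem _ (ih b hb)
  have hpow_iso : ∀ (k : ℕ) (x y : V), ⟪(σ ^ k) x, (σ ^ k) y⟫ = ⟪x, y⟫ := by
    intro k
    induction k with
    | zero => intro x y; simp
    | succ k ih => intro x y; rw [hpow_apply, hpow_apply, hiso]; exact ih x y
  have hpow_fix : ∀ (k : ℕ) (x : V), σ x = x → (σ ^ k) x = x := by
    intro k x hx
    induction k with
    | zero => simp
    | succ k ih => rw [hpow_apply, ih, hx]
  have hrange : ∀ v ∈ Set.range a, σ v ∈ Set.range a := by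
    intro v hv; rw [← hΔσ]; exact ⟨v, hv, rfl⟩
  have hpow_range : ∀ (k : ℕ), ∀ v ∈ Set.range a, (σ ^ k) v ∈ Set.range a := by
    intro k
    induction k with
    | zero => intro v hv; simpa using hv
    | succ k ih => intro v hv; rw [hpow_apply]; exact hrange _ (ih v hv)
  -- the averaging operator
  set avg : V → V := fun v => ∑ k ∈ Finset.range m, (σ ^ k) v with havg_def
  have havg_sub : ∀ v w : V, avg (v - w) = avg v - avg w := by
    intro v w
    simp [havg_def, map_sub, Finset.sum_sub_distrib]
  have hfix_avg : ∀ v : V, σ (avg v) = avg v := by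
    intro v
    have h1 := Finset.sum_range_succ' (fun k => (σ ^ k) v) m
    have h2 := Finset.sum_range_succ (fun k => (σ ^ k) v) m
    have h3 : (σ ^ m) v = (σ ^ 0) v := by rw [hσm]; rfl
    have key : ∑ k ∈ Finset.range m, (σ ^ (k+1)) v = ∑ k ∈ Finset.range m, (σ ^ k) v := by
      have := h1.symm.trans h2
      rw [h3] at this
      exact add_right_cancel this
    calc σ (avg v) = ∑ k ∈ Finset.range m, σ ((σ ^ k) v) := by
          simp [havg_def, map_sum]
      _ = ∑ k ∈ Finset.range m, (σ ^ (k+1)) v := by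
          refine Finset.sum_congr rfl fun k _ => (hpow_apply k v).symm
      _ = avg v := key
  have havg_sigma : ∀ v : V, avg (σ v) = avg v := by
    intro v
    have : avg (σ v) = σ (avg v) := by
      simp only [havg_def, map_sum]
      refine Finset.sum_congr rfl fun k _ => ?_
      rw [← hpow_apply' k v, hpow_apply k v]
    rw [this, hfix_avg]
  have havg_pow : ∀ (k : ℕ) (v : V), avg ((σ ^ k) v) = avg v := by
    intro k
    induction k with
    | zero => intro v; rw [pow_zero]; rfl
    | succ k ih => intro v; rw [hpow_apply', ih, havg_sigma]
  have hinner_avg : ∀ (v x : V), σ x = x → ⟪avg v, x⟫ = (m : ℝ) * ⟪v, x⟫ := by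
    intro v x hx
    calc ⟪avg v, x⟫ = ∑ k ∈ Finset.range m, ⟪(σ ^ k) v, x⟫ := sum_inner _ _ _
      _ = ∑ _k ∈ Finset.range m, ⟪v, x⟫ := by
          refine Finset.sum_congr rfl fun k _ => ?_
          conv_lhs => rw [← hpow_fix k x hx]
          exact hpow_iso k v x
      _ = (m : ℝ) * ⟪v, x⟫ := by
          rw [Finset.sum_const, Finset.card_range, nsmul_eq_mul]
  -- restriction equality iff equal averages
  have hrestr_iff : ∀ v v' : V, (∀ x : V, σ x = x → ⟪v, x⟫ = ⟪v', x⟫) ↔ avg v = avg v' := by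
    intro v v'
    constructor
    · intro h
      set x := avg v - avg v' with hx
      have hxfix : σ x = x := by rw [hx, map_sub, hfix_avg, hfix_avg]
      have h0 : ⟪avg v - avg v', x⟫ = 0 := by
        rw [inner_sub_left, hinner_avg v x hxfix, hinner_avg v' x hxfix, h x hxfix, sub_self]
      rw [← hx] at h0
      have := inner_self_eq_zero.1 h0
      exact sub_eq_zero.1 this
    · intro h x hx
      have h1 := hinner_avg v x hx
      have h2 := hinner_avg v' x hx
      rw [h, h2] at h1
      exact (mul_left_cancel₀ (ne_of_gt hmR) h1.symm)
  -- finite dimensionality and the dual vector w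
  have hfd : FiniteDimensional ℝ V := ⟨Submodule.fg_def.mpr ⟨Φ, hΦ.1, hΦ.2.2.1⟩⟩
  have hli : LinearIndepOn ℝ id (Set.range a) := (linearIndepOn_id_range_iff hinj).mpr hind
  set B := Module.Basis.extend hli with hB
  set g : V →ₗ[ℝ] ℝ :=
    B.constr ℝ (fun j => if (j : V) ∈ Set.range a then (1:ℝ) else 0) with hg_def
  have hg : ∀ v ∈ Set.range a, g v = 1 := by
    intro v hv
    have hv' : v ∈ hli.extend (Set.subset_univ _) := hli.subset_extend _ hv
    have hBv : B ⟨v, hv'⟩ = v := Module.Basis.extend_apply_self hli ⟨v, hv'⟩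
    rw [← hBv, hg_def, Module.Basis.constr_basis]
    simp [hv]
  -- average of a root is nonzero
  have hpos_case : ∀ (v : V) (c : ι → ℕ), v = ∑ i, (c i : ℝ) • a i → v ≠ 0 →
      0 < g (avg v) := by
    intro v c hvc hv0
    set S : ℝ := ∑ i, (c i : ℝ) with hS_def
    have hSpos : 0 < S := by
      have hnn : ∀ i ∈ Finset.univ, (0:ℝ) ≤ (c i : ℝ) := fun i _ => by positivity
      by_contra hS
      push_neg at hS
      have hS0 : S = 0 := le_antisymm hS (Finset.sum_nonneg hnn)
      have hall : ∀ i ∈ Finset.univ, (c i : ℝ) = 0 :=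
        (Finset.sum_eq_zero_iff_of_nonneg hnn).1 hS0
      apply hv0
      rw [hvc]
      refine Finset.sum_eq_zero fun i _ => ?_
      rw [hall i (Finset.mem_univ i), zero_smul]
    have hkey : ∀ k : ℕ, g ((σ ^ k) v) = S := by
      intro k
      rw [hvc, map_sum, map_sum]
      rw [hS_def]
      refine Finset.sum_congr rfl fun i _ => ?_
      rw [map_smul, map_smul, smul_eq_mul]
      rw [hg _ (hpow_range k (a i) (Set.mem_range_self i)), mul_one]
    have : g (avg v) = (m : ℝ) * S := by
      rw [havg_def]
      simp only [map_sum]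
      calc ∑ k ∈ Finset.range m, g ((σ ^ k) v) = ∑ _k ∈ Finset.range m, S :=
            Finset.sum_congr rfl fun k _ => hkey k
        _ = (m : ℝ) * S := by rw [Finset.sum_const, Finset.card_range, nsmul_eq_mul]
    rw [this]
    positivity
  have havg_ne : ∀ b ∈ Φ, avg b ≠ 0 := by
    intro b hb
    have hb0 : b ≠ 0 := fun h => hΦ.2.1 (h ▸ hb)
    rcases hbase b hb with ⟨c, hc⟩ | ⟨c, hc⟩
    · intro h
      have := hpos_case b c hc hb0
      rw [h, map_zero] at this
      exact lt_irrefl 0 this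
    · intro h
      set p : V := ∑ i, (c i : ℝ) • a i with hp
      have hbp : b = -p := hc
      have hp0 : p ≠ 0 := fun hq => hb0 (by rw [hbp, hq, neg_zero])
      have hap : avg p ≠ 0 := by
        intro hq
        have := hpos_case p c rfl hp0
        rw [hq, map_zero] at this
        exact lt_irrefl 0 this
      apply hap
      have : avg b = -avg p := by
        rw [hbp]
        simp [havg_def, map_neg, Finset.sum_neg_distrib]
      rw [this] at h
      exact neg_eq_zero.1 h
  constructor
  · -- part 1
    intro b hb
    refine ⟨avg b, hfix_avg b, ?_⟩
    intro h
    have h1 := hinner_avg b (avg b) (hfix_avg b)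
    rw [h, mul_zero] at h1
    exact havg_ne b hb (inner_self_eq_zero.1 h1)
  · -- part 2
    intro b hb b' hb'
    constructor
    · intro h
      have heq : avg b = avg b' := (hrestr_iff b b').1 h
      have h1 : (0:ℝ) < ⟪avg b, avg b⟫ := RS.inner_self_pos (havg_ne b hb)
      have h2 : ⟪avg b', avg b⟫ = (m:ℝ) * ⟪b', avg b⟫ := hinner_avg b' (avg b) (hfix_avg b)
      rw [← heq] at h2
      have h3 : 0 < ⟪b', avg b⟫ := by nlinarith
      have h4 : ⟪b', avg b⟫ = ∑ k ∈ Finset.range m, ⟪b', (σ ^ k) b⟫ := by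
        rw [havg_def]
        exact inner_sum _ _ _
      have h5 : ∃ k ∈ Finset.range m, 0 < ⟪b', (σ ^ k) b⟫ := by
        by_contra hc
        push_neg at hc
        have hle : ⟪b', avg b⟫ ≤ 0 := h4 ▸ Finset.sum_nonpos hc
        linarith
      obtain ⟨k, -, hk⟩ := h5
      by_cases hcb : (σ ^ k) b = b'
      · exact ⟨k, hcb⟩
      · exfalso
        have hcΦ := hpow_mem k b hb
        have hsub : (σ ^ k) b - b' ∈ Φ :=
          RS.sub_mem hΦ hcΦ hb' hcb (by rwa [real_inner_comm])
        have hz : avg ((σ ^ k) b - b') = 0 := by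
          rw [havg_sub, havg_pow, heq, sub_self]
        exact havg_ne _ hsub hz
    · rintro ⟨k, rfl⟩
      intro x hx
      calc ⟪b, x⟫ = ⟪(σ ^ k) b, (σ ^ k) x⟫ := (hpow_iso k b x).symm
        _ = ⟪(σ ^ k) b, x⟫ := by rw [hpow_fix k x hx]
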